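/- (Theorem 1, cross-entropy risk form.) Let 𝒳, 𝒴, 𝒵 be finite nonempty sets, let μ_1, …, μ_M (M ≥ 1) be probability measures on 𝒳 × 𝒴, let f : 𝒳 → 𝒵, and for each i let ν_i be the pushforward of μ_i under the map (x, y) ↦ (f(x), y). Suppose ν_1 = ν_2 = ⋯ = ν_M (domain invariance of the features). Then the infimum over a single stochastic classifier g : 𝒵 → Δ(𝒴) of Σ_{i=1}^M Σ_{(z,y)} ν_i({(z,y)}) · (−log g(z)(y)), minus Σ_{i=1}^M of the infimum over stochastic classifiers h_i : 𝒳 → Δ(𝒴) of Σ_{(x,y)} μ_i({(x,y)}) · (−log h_i(x)(y)), is at least Δ_p = Σ_{i=1}^M ( I_{μ_i}(X; Y) − min_{1≤j≤M} I_{μ_j}(X; Y) ). Equivalently, Σ_{i=1}^M H_{ν_i}(Y | Z) − Σ_{i=1}^M H_{μ_i}(Y | X) ≥ Δ_p. -/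

import Mathlib

open scoped ENNReal

/-- A probability mass function on a finite type, given as a real-valued function. -/
def IsPMF {α : Type*} [Fintype α] (p : α → ℝ) : Prop :=
  (∀ a, 0 ≤ p a) ∧ ∑ a, p a = 1

/-- First marginal of a joint distribution on `X × Y`. -/
noncomputable def marg1 {X Y : Type*} [Fintype Y] (μ : X × Y → ℝ) (x : X) : ℝ :=
  ∑ y, μ (x, y)

/-- Second marginal of a joint distribution on `X × Y`. -/
noncomputable def marg2 {X Y : Type*} [Fintype X] (μ : X × Y → ℝ) (y : Y) : ℝ :=
  ∑ x, μ (x, y)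

/-- Mutual information `I_μ(X; Y)` of a joint distribution `μ` on `X × Y`;
terms with `μ p = 0` vanish since `0 * log _ = 0` (and `Real.log 0 = 0`). -/
noncomputable def mutualInfo {X Y : Type*} [Fintype X] [Fintype Y] (μ : X × Y → ℝ) : ℝ :=
  ∑ p : X × Y, μ p * Real.log (μ p / (marg1 μ p.1 * marg2 μ p.2))

/-- Entropy `H_μ(Y)` of the second marginal (with the convention `0 * log 0 = 0`). -/
noncomputable def entropy2 {X Y : Type*} [Fintype X] [Fintype Y] (μ : X × Y → ℝ) : ℝ :=
  -∑ y, marg2 μ y * Real.log (marg2 μ y)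

/-- Conditional entropy `H_μ(Y | X) = H_μ(Y) - I_μ(X; Y)`. -/
noncomputable def condEntropy2 {X Y : Type*} [Fintype X] [Fintype Y] (μ : X × Y → ℝ) : ℝ :=
  entropy2 μ - mutualInfo μ

/-- `-log t`, valued in `[0, ∞]`, with `-log 0 = ∞`. -/
noncomputable def negLog (t : ℝ) : ℝ≥0∞ :=
  if t = 0 then ⊤ else ENNReal.ofReal (-Real.log t)

/-- Expected cross-entropy risk of a stochastic classifier `g : X → Δ(Y)` under a
joint distribution `μ` on `X × Y`, valued in `[0, ∞]`. -/
noncomputable def ceRisk {X Y : Type*} [Fintype X] [Fintype Y]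
    (μ : X × Y → ℝ) (g : X → Y → ℝ) : ℝ≥0∞ :=
  ∑ p : X × Y, ENNReal.ofReal (μ p) * negLog (g p.1 p.2)

/-- Pushforward of a joint distribution `μ` on `X × Y` under `(x, y) ↦ (f x, y)`:
the joint law of `(f(X), Y)`. -/
noncomputable def push {X Y Z : Type*} [Fintype X] [DecidableEq Z]
    (f : X → Z) (μ : X × Y → ℝ) : Z × Y → ℝ :=
  fun p => ∑ x ∈ Finset.univ.filter (fun x => f x = p.1), μ (x, p.2)

section Aux

variable {X Y : Type*} [Fintype X] [Fintype Y]

lemma marg1_nonneg {μ : X × Y → ℝ} (hμ : ∀ p, 0 ≤ μ p) (x : X) : 0 ≤ marg1 μ x :=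
  Finset.sum_nonneg fun _ _ => hμ _

lemma le_marg1 {μ : X × Y → ℝ} (hμ : ∀ p, 0 ≤ μ p) (p : X × Y) : μ p ≤ marg1 μ p.1 := by
  have := Finset.single_le_sum (f := fun y => μ (p.1, y)) (fun _ _ => hμ _)
    (Finset.mem_univ p.2)
  simpa [marg1] using this

lemma le_marg2 {μ : X × Y → ℝ} (hμ : ∀ p, 0 ≤ μ p) (p : X × Y) : μ p ≤ marg2 μ p.2 := by
  have := Finset.single_le_sum (f := fun x => μ (x, p.2)) (fun _ _ => hμ _)
    (Finset.mem_univ p.1)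
  simpa [marg2] using this

lemma sum_marg1 (μ : X × Y → ℝ) : ∑ x, marg1 μ x = ∑ p : X × Y, μ p := by
  rw [Fintype.sum_prod_type]; rfl

/-- The conditional distribution of `Y` given `X = x`, as a classifier. -/
noncomputable def condK [Nonempty Y] (μ : X × Y → ℝ) (x : X) (y : Y) : ℝ :=
  if marg1 μ x = 0 then (Fintype.card Y : ℝ)⁻¹ else μ (x, y) / marg1 μ x

lemma condK_pmf [Nonempty Y] {μ : X × Y → ℝ} (hμ : ∀ p, 0 ≤ μ p) (x : X) :
    IsPMF (condK μ x) := by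
  by_cases h : marg1 μ x = 0
  · constructor
    · intro y; simp only [condK, if_pos h]
      positivity
    · simp only [condK, if_pos h]
      rw [Finset.sum_const, Finset.card_univ, nsmul_eq_mul]
      rw [mul_inv_cancel₀]
      exact Nat.cast_ne_zero.2 Fintype.card_ne_zero
  · constructor
    · intro y; simp only [condK, h, if_false]
      exact div_nonneg (hμ _) (marg1_nonneg hμ x)
    · simp only [condK, h, if_false]
      rw [← Finset.sum_div, ← marg1, div_self h]

lemma condEntropy2_eq {μ : X × Y → ℝ} (hμ : ∀ p, 0 ≤ μ p) :
    condEntropy2 μ = ∑ p : X × Y, μ p * -Real.log (μ p / marg1 μ p.1) := by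
  have hent : entropy2 μ = -∑ p : X × Y, μ p * Real.log (marg2 μ p.2) := by
    rw [entropy2]
    congr 1
    rw [Fintype.sum_prod_type, Finset.sum_comm]
    refine Finset.sum_congr rfl fun y _ => ?_
    rw [marg2, Finset.sum_mul]
    simp [marg2]
  rw [condEntropy2, hent, mutualInfo]
  rw [← neg_add', ← Finset.sum_add_distrib, ← Finset.sum_neg_distrib]
  refine Finset.sum_congr rfl fun p _ => ?_
  by_cases h : μ p = 0
  · simp [h]
  · have hp : 0 < μ p := lt_of_le_of_ne (hμ p) (Ne.symm h)
    have h1 : 0 < marg1 μ p.1 := lt_of_lt_of_le hp (le_marg1 hμ p)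
    have h2 : 0 < marg2 μ p.2 := lt_of_lt_of_le hp (le_marg2 hμ p)
    rw [Real.log_div h (by positivity), Real.log_mul h1.ne' h2.ne',
      Real.log_div h h1.ne']
    ring

lemma condEntropy2_term_nonneg {μ : X × Y → ℝ} (hμ : ∀ p, 0 ≤ μ p) (p : X × Y) :
    0 ≤ μ p * -Real.log (μ p / marg1 μ p.1) := by
  by_cases h : μ p = 0
  · simp [h]
  · have hp : 0 < μ p := lt_of_le_of_ne (hμ p) (Ne.symm h)
    have h1 : 0 < marg1 μ p.1 := lt_of_lt_of_le hp (le_marg1 hμ p)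
    have : μ p / marg1 μ p.1 ≤ 1 := (div_le_one h1).2 (le_marg1 hμ p)
    have := Real.log_nonpos (by positivity) this
    nlinarith

lemma condEntropy2_nonneg {μ : X × Y → ℝ} (hμ : ∀ p, 0 ≤ μ p) :
    0 ≤ condEntropy2 μ := by
  rw [condEntropy2_eq hμ]
  exact Finset.sum_nonneg fun p _ => condEntropy2_term_nonneg hμ p

lemma ceRisk_condK [Nonempty Y] {μ : X × Y → ℝ} (hμ : ∀ p, 0 ≤ μ p) :
    ceRisk μ (condK μ) = ENNReal.ofReal (condEntropy2 μ) := by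
  rw [condEntropy2_eq hμ, ceRisk,
    ENNReal.ofReal_sum_of_nonneg (fun p _ => condEntropy2_term_nonneg hμ p)]
  refine Finset.sum_congr rfl fun p _ => ?_
  by_cases h : μ p = 0
  · simp [h]
  · have hp : 0 < μ p := lt_of_le_of_ne (hμ p) (Ne.symm h)
    have h1 : 0 < marg1 μ p.1 := lt_of_lt_of_le hp (le_marg1 hμ p)
    have hc : condK μ p.1 p.2 = μ p / marg1 μ p.1 := by
      simp [condK, h1.ne']
    rw [hc]
    unfold negLog
    rw [if_neg (by positivity), ← ENNReal.ofReal_mul (hμ p)]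

lemma gibbs {μ : X × Y → ℝ} (hμ : IsPMF μ) {h : X → Y → ℝ}
    (hh : ∀ x, IsPMF (h x)) :
    ENNReal.ofReal (condEntropy2 μ) ≤ ceRisk μ h := by
  obtain ⟨hn, hs⟩ := hμ
  by_cases hz : ∃ p : X × Y, μ p ≠ 0 ∧ h p.1 p.2 = 0
  · obtain ⟨p, hp, hhp⟩ := hz
    have hterm : ENNReal.ofReal (μ p) * negLog (h p.1 p.2) = ⊤ := by
      unfold negLog
      rw [if_pos hhp, ENNReal.mul_top
        (ENNReal.ofReal_pos.2 (lt_of_le_of_ne (hn p) (Ne.symm hp))).ne']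
    have : ceRisk μ h = ⊤ := by
      refine eq_top_iff.2 ?_
      calc (⊤ : ℝ≥0∞) = _ := hterm.symm
        _ ≤ _ := Finset.single_le_sum
            (f := fun p : X × Y => ENNReal.ofReal (μ p) * negLog (h p.1 p.2))
            (fun _ _ => zero_le) (Finset.mem_univ p)
    rw [this]; exact le_top
  push_neg at hz
  have hle1 : ∀ p : X × Y, h p.1 p.2 ≤ 1 := by
    intro p
    have := Finset.single_le_sum (f := fun y => h p.1 y) (fun y _ => (hh p.1).1 y)
      (Finset.mem_univ p.2)
    rw [(hh p.1).2] at this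
    exact this
  have hterm : ∀ p : X × Y, 0 ≤ μ p * -Real.log (h p.1 p.2) := by
    intro p
    have := Real.log_nonpos ((hh p.1).1 p.2) (hle1 p)
    nlinarith [hn p]
  have hrisk : ceRisk μ h = ENNReal.ofReal (∑ p : X × Y, μ p * -Real.log (h p.1 p.2)) := by
    rw [ceRisk, ENNReal.ofReal_sum_of_nonneg (fun p _ => hterm p)]
    refine Finset.sum_congr rfl fun p _ => ?_
    by_cases hp : μ p = 0
    · simp [hp]
    · unfold negLog
      rw [if_neg (hz p hp), ← ENNReal.ofReal_mul (hn p)]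
  rw [hrisk]
  refine ENNReal.ofReal_le_ofReal ?_
  rw [condEntropy2_eq hn]
  rw [← sub_nonneg, ← Finset.sum_sub_distrib]
  have key : ∀ p : X × Y,
      μ p - h p.1 p.2 * marg1 μ p.1 ≤ μ p * -Real.log (h p.1 p.2) - μ p * -Real.log (μ p / marg1 μ p.1) := by
    intro p
    by_cases hp : μ p = 0
    · simp only [hp, zero_sub, zero_mul, sub_zero, sub_self]
      have := mul_nonneg ((hh p.1).1 p.2) (marg1_nonneg hn p.1)
      linarith
    · have hpp : 0 < μ p := lt_of_le_of_ne (hn p) (Ne.symm hp)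
      have h1 : 0 < marg1 μ p.1 := lt_of_lt_of_le hpp (le_marg1 hn p)
      have hhp : 0 < h p.1 p.2 := lt_of_le_of_ne ((hh p.1).1 p.2) (Ne.symm (hz p hp))
      have ht : 0 < h p.1 p.2 * marg1 μ p.1 / μ p := by positivity
      have hlog := Real.log_le_sub_one_of_pos ht
      have hlogeq : Real.log (h p.1 p.2 * marg1 μ p.1 / μ p)
          = Real.log (h p.1 p.2) - Real.log (μ p / marg1 μ p.1) := by
        rw [Real.log_div (by positivity) hp, Real.log_mul hhp.ne' h1.ne',
          Real.log_div hp h1.ne']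
        ring
      have hdiv : μ p * (h p.1 p.2 * marg1 μ p.1 / μ p) = h p.1 p.2 * marg1 μ p.1 := by
        field_simp
      nlinarith
  refine le_trans ?_ (Finset.sum_le_sum fun p _ => key p)
  rw [Finset.sum_sub_distrib, hs]
  have : ∑ p : X × Y, h p.1 p.2 * marg1 μ p.1 = 1 := by
    rw [Fintype.sum_prod_type]
    have : ∀ x, ∑ y, h x y * marg1 μ x = marg1 μ x := by
      intro x
      rw [← Finset.sum_mul, (hh x).2, one_mul]
    rw [Finset.sum_congr rfl fun x _ => this x, sum_marg1, hs]
  rw [this]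
  simp

lemma iInf_ceRisk [Nonempty Y] {μ : X × Y → ℝ} (hμ : IsPMF μ) :
    (⨅ h : {h : X → Y → ℝ // ∀ x, IsPMF (h x)}, ceRisk μ h.1)
      = ENNReal.ofReal (condEntropy2 μ) := by
  refine le_antisymm ?_ (le_iInf fun h => gibbs hμ h.2)
  exact iInf_le_of_le ⟨condK μ, condK_pmf hμ.1⟩ (le_of_eq (ceRisk_condK hμ.1))

end Aux

section Push

variable {X Y Z : Type*} [Fintype X] [Fintype Y] [Fintype Z] [DecidableEq Z]

lemma push_nonneg {μ : X × Y → ℝ} (hμ : ∀ p, 0 ≤ μ p) (f : X → Z) (q : Z × Y) :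
    0 ≤ push f μ q :=
  Finset.sum_nonneg fun _ _ => hμ _

lemma marg2_push (f : X → Z) (μ : X × Y → ℝ) (y : Y) :
    marg2 (push f μ) y = marg2 μ y := by
  rw [marg2, marg2]
  simp only [push]
  exact Finset.sum_fiberwise_of_maps_to (fun x _ => Finset.mem_univ (f x)) (fun x => μ (x, y))

lemma entropy2_push (f : X → Z) (μ : X × Y → ℝ) :
    entropy2 (push f μ) = entropy2 μ := by
  unfold entropy2
  simp [marg2_push]

lemma push_isPMF {μ : X × Y → ℝ} (hμ : IsPMF μ) (f : X → Z) : IsPMF (push f μ) := by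
  refine ⟨push_nonneg hμ.1 f, ?_⟩
  rw [Fintype.sum_prod_type, Finset.sum_comm]
  have : ∀ y, ∑ z, push f μ (z, y) = ∑ x, μ (x, y) := by
    intro y
    exact Finset.sum_fiberwise_of_maps_to (fun x _ => Finset.mem_univ (f x)) (fun x => μ (x, y))
  rw [Finset.sum_congr rfl fun y _ => this y, ← hμ.2, Fintype.sum_prod_type,
    Finset.sum_comm]

lemma ceRisk_push {μ : X × Y → ℝ} (hμ : ∀ p, 0 ≤ μ p) (f : X → Z) (g : Z → Y → ℝ) :
    ceRisk μ (fun x => g (f x)) = ceRisk (push f μ) g := by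
  rw [ceRisk, ceRisk, Fintype.sum_prod_type, Fintype.sum_prod_type]
  rw [Finset.sum_comm (γ := X), Finset.sum_comm (γ := Z)]
  refine Finset.sum_congr rfl fun y _ => ?_
  rw [← Finset.sum_fiberwise_of_maps_to (g := f) (fun x _ => Finset.mem_univ (f x))
    (fun x => ENNReal.ofReal (μ (x, y)) * negLog (g (f x) y))]
  refine Finset.sum_congr rfl fun z _ => ?_
  have : push f μ (z, y) = ∑ x ∈ Finset.univ.filter (fun x => f x = z), μ (x, y) := rfl
  rw [this, ENNReal.ofReal_sum_of_nonneg (fun x _ => hμ _), Finset.sum_mul]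
  refine Finset.sum_congr rfl fun x hx => ?_
  rw [Finset.mem_filter] at hx
  rw [hx.2]

lemma condEntropy2_le_push [Nonempty Y] {μ : X × Y → ℝ} (hμ : IsPMF μ) (f : X → Z) :
    condEntropy2 μ ≤ condEntropy2 (push f μ) := by
  have hp := push_isPMF hμ f
  have h1 : ENNReal.ofReal (condEntropy2 μ)
      ≤ ENNReal.ofReal (condEntropy2 (push f μ)) := by
    calc ENNReal.ofReal (condEntropy2 μ)
        ≤ ceRisk μ (fun x => condK (push f μ) (f x)) :=
          gibbs hμ (fun x => condK_pmf hp.1 (f x))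
      _ = ceRisk (push f μ) (condK (push f μ)) := ceRisk_push hμ.1 f _
      _ = ENNReal.ofReal (condEntropy2 (push f μ)) := ceRisk_condK hp.1
  exact (ENNReal.ofReal_le_ofReal_iff (condEntropy2_nonneg hp.1)).1 h1

lemma mutualInfo_push_le [Nonempty Y] {μ : X × Y → ℝ} (hμ : IsPMF μ) (f : X → Z) :
    mutualInfo (push f μ) ≤ mutualInfo μ := by
  have h1 := condEntropy2_le_push hμ f
  have h2 := entropy2_push f μ
  unfold condEntropy2 at h1
  linarith

end Push

/-- Theorem 1, cross-entropy risk form: under domain invariance of the features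
(`ν_1 = ⋯ = ν_M` with `ν_i` the law of `(f(X_i), Y)`), the optimal total source
cross-entropy risk achievable with a single stochastic classifier on the features
exceeds the sum of the per-domain optimal risks on the raw inputs by at least the
information gap `Δ_p`; equivalently,
`∑ i, H_{ν_i}(Y | Z) - ∑ i, H_{μ_i}(Y | X) ≥ Δ_p`. -/
theorem theorem1_crossEntropy_form
    {X Y Z : Type*} [Fintype X] [Fintype Y] [Fintype Z]
    [Nonempty X] [Nonempty Y] [Nonempty Z] [DecidableEq Z]
    (M : ℕ) (hM : 1 ≤ M) (μ : Fin M → X × Y → ℝ) (hμ : ∀ i, IsPMF (μ i))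
    (f : X → Z) (hinv : ∀ i j, push f (μ i) = push f (μ j)) :
    ENNReal.ofReal
        (∑ i, (mutualInfo (μ i)
          - Finset.univ.inf' ⟨⟨0, hM⟩, Finset.mem_univ _⟩ (fun j => mutualInfo (μ j))))
      ≤ (⨅ g : {g : Z → Y → ℝ // ∀ z, IsPMF (g z)}, ∑ i, ceRisk (push f (μ i)) g.1)
        - ∑ i, ⨅ h : {h : X → Y → ℝ // ∀ x, IsPMF (h x)}, ceRisk (μ i) h.1
    ∧ ∑ i, (mutualInfo (μ i)
          - Finset.univ.inf' ⟨⟨0, hM⟩, Finset.mem_univ _⟩ (fun j => mutualInfo (μ j)))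
      ≤ ∑ i, condEntropy2 (push f (μ i)) - ∑ i, condEntropy2 (μ i) := by
  have i0 : Fin M := ⟨0, hM⟩
  have hMIpush : ∀ i : Fin M, mutualInfo (push f (μ i))
      ≤ Finset.univ.inf' ⟨⟨0, hM⟩, Finset.mem_univ _⟩ (fun j => mutualInfo (μ j)) := by
    intro i
    refine Finset.le_inf' _ _ fun j _ => ?_
    rw [hinv i j]
    exact mutualInfo_push_le (hμ j) f
  have hreal : ∑ i, (mutualInfo (μ i)
        - Finset.univ.inf' ⟨⟨0, hM⟩, Finset.mem_univ _⟩ (fun j => mutualInfo (μ j)))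
      ≤ ∑ i, condEntropy2 (push f (μ i)) - ∑ i, condEntropy2 (μ i) := by
    rw [← Finset.sum_sub_distrib]
    refine Finset.sum_le_sum fun i _ => ?_
    have h2 := entropy2_push f (μ i)
    have h3 := hMIpush i
    unfold condEntropy2
    linarith
  refine ⟨?_, hreal⟩
  have hA : (⨅ g : {g : Z → Y → ℝ // ∀ z, IsPMF (g z)}, ∑ i, ceRisk (push f (μ i)) g.1)
      = ENNReal.ofReal (∑ i, condEntropy2 (push f (μ i))) := by
    refine le_antisymm ?_ ?_
    · refine iInf_le_of_le
        ⟨condK (push f (μ ⟨0, hM⟩)), condK_pmf (push_isPMF (hμ ⟨0, hM⟩) f).1⟩ ?_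
      rw [ENNReal.ofReal_sum_of_nonneg
        (fun i _ => condEntropy2_nonneg (push_isPMF (hμ i) f).1)]
      refine le_of_eq (Finset.sum_congr rfl fun i _ => ?_)
      rw [hinv i ⟨0, hM⟩]
      exact ceRisk_condK (push_isPMF (hμ ⟨0, hM⟩) f).1
    · refine le_iInf fun g => ?_
      rw [ENNReal.ofReal_sum_of_nonneg
        (fun i _ => condEntropy2_nonneg (push_isPMF (hμ i) f).1)]
      exact Finset.sum_le_sum fun i _ => gibbs (push_isPMF (hμ i) f) g.2
  have hB : (∑ i, ⨅ h : {h : X → Y → ℝ // ∀ x, IsPMF (h x)}, ceRisk (μ i) h.1)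
      = ENNReal.ofReal (∑ i, condEntropy2 (μ i)) := by
    rw [Finset.sum_congr rfl fun i _ => iInf_ceRisk (hμ i),
      ← ENNReal.ofReal_sum_of_nonneg (fun i _ => condEntropy2_nonneg (hμ i).1)]
  rw [hA, hB,
    ← ENNReal.ofReal_sub _ (Finset.sum_nonneg fun i _ => condEntropy2_nonneg (hμ i).1)]
  exact ENNReal.ofReal_le_ofReal hreal
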